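/- Assume a and b are both distinct from a^{-1} and b^{-1}. Then a Laurent polynomial f satisfies T_1 f = −f if and only if f[z] = z^{-1}(1−az)(1−bz)·g[z] for some symmetric Laurent polynomial g (i.e. g[z] = g[z^{-1}]). -/

import Mathlib

open scoped BigOperators

noncomputable section

/-- The field of rational functions over ℂ, in which Laurent polynomials live. -/
local notation "F" => RatFunc ℂ

/-- Scalar constants in `F`. -/
def Cc (x : ℂ) : F := RatFunc.C x

/-- The variable `z`. -/
def Xv : F := RatFunc.X

/-- Substitution `z ↦ t` in a rational function (well defined since the
substitution points used here are transcendental over ℂ). -/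
def subst (t : F) (f : F) : F := RatFunc.eval (RatFunc.C) t f

/-- `f` is a Laurent polynomial in `z`. -/
def IsLaurent (f : F) : Prop :=
  ∃ (p : Polynomial ℂ) (n : ℕ), f = algebraMap (Polynomial ℂ) F p / Xv ^ n

/-- The DAHA operator `T₁` of the basic representation. -/
def T1op (a b : ℂ) (f : F) : F :=
  ((Cc a + Cc b) * Xv - (1 + Cc a * Cc b)) / (1 - Xv ^ 2) * f
    + ((1 - Cc a * Xv) * (1 - Cc b * Xv)) / (1 - Xv ^ 2) * subst Xv⁻¹ f

/-- The DAHA operator `T₀` of the basic representation. -/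
def T0op (q c d : ℂ) (f : F) : F :=
  (Cc q)⁻¹ * Xv * ((Cc c * Cc d + Cc q) * Xv - (Cc c + Cc d) * Cc q) / (Cc q - Xv ^ 2) * f
    - ((Cc c - Xv) * (Cc d - Xv)) / (Cc q - Xv ^ 2) * subst (Cc q * Xv⁻¹) f

/-- The inverse of `T₁`: `T₁⁻¹ = -(ab)⁻¹T₁ - (1 + (ab)⁻¹)`. -/
def T1inv (a b : ℂ) (f : F) : F :=
  -(Cc a * Cc b)⁻¹ * T1op a b f - (1 + (Cc a * Cc b)⁻¹) * f

/-- The inverse of `T₀`: `T₀⁻¹ = -q(cd)⁻¹T₀ - (1 + q(cd)⁻¹)`. -/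
def T0inv (q c d : ℂ) (f : F) : F :=
  -(Cc q * (Cc c * Cc d)⁻¹) * T0op q c d f - (1 + Cc q * (Cc c * Cc d)⁻¹) * f

/-- `Y = T₁T₀`. -/
def Yop (q a b c d : ℂ) (f : F) : F := T1op a b (T0op q c d f)

/-- `Y⁻¹ = T₀⁻¹T₁⁻¹`. -/
def Yinv (q a b c d : ℂ) (f : F) : F := T0inv q c d (T1inv a b f)

/-- `D = Y + q⁻¹abcd·Y⁻¹`. -/
def Dop (q a b c d : ℂ) (f : F) : F :=
  Yop q a b c d f + Cc (q⁻¹ * (a * b * c * d)) * Yinv q a b c d f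

/-- The Askey–Wilson second order q-difference operator `D_sym`. -/
def DsymOp (q a b c d : ℂ) (f : F) : F :=
  ((1 - Cc a * Xv) * (1 - Cc b * Xv) * (1 - Cc c * Xv) * (1 - Cc d * Xv)) /
      ((1 - Xv ^ 2) * (1 - Cc q * Xv ^ 2)) * (subst (Cc q * Xv) f - f)
    + ((Cc a - Xv) * (Cc b - Xv) * (Cc c - Xv) * (Cc d - Xv)) /
      ((1 - Xv ^ 2) * (Cc q - Xv ^ 2)) * (subst ((Cc q)⁻¹ * Xv) f - f)
    + (1 + (Cc q)⁻¹ * Cc a * Cc b * Cc c * Cc d) * f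

/-- q-Pochhammer symbol `(x;q)_k`. -/
def qPoch (x q : ℂ) (k : ℕ) : ℂ := ∏ j ∈ Finset.range k, (1 - x * q ^ j)

/-- The monic Askey–Wilson Laurent polynomial `P_n[z;a,b,c,d|q]`. -/
def AWP (q a b c d : ℂ) (n : ℕ) : F :=
  Cc (a⁻¹ ^ n) * ∑ k ∈ Finset.range (n + 1),
    Cc (qPoch (q⁻¹ ^ n) q k * qPoch (a * b * q ^ k) q (n - k) * qPoch (a * c * q ^ k) q (n - k)
        * qPoch (a * d * q ^ k) q (n - k) * q ^ k
        / (qPoch q q k * qPoch (a * b * c * d * q ^ (n + k) / q) q (n - k)))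
      * (∏ j ∈ Finset.range k, (1 - Cc a * Xv * Cc (q ^ j)))
      * (∏ j ∈ Finset.range k, (1 - Cc a * Xv⁻¹ * Cc (q ^ j)))

/-- `Q_n[z] := (ab)⁻¹ z⁻¹ (1-az)(1-bz) P_{n-1}[z;qa,qb,c,d|q]`. -/
def Qpoly (q a b c d : ℂ) (n : ℕ) : F :=
  (Cc (a * b))⁻¹ * Xv⁻¹ * (1 - Cc a * Xv) * (1 - Cc b * Xv) *
    AWP q (q * a) (q * b) c d (n - 1)

/-- Elementary symmetric polynomials in a,b,c,d. -/
def esym1 (a b c d : ℂ) : ℂ := a + b + c + d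
def esym2 (a b c d : ℂ) : ℂ := a*b + a*c + b*c + a*d + b*d + c*d
def esym3 (a b c d : ℂ) : ℂ := a*b*c + a*b*d + a*c*d + b*c*d
def esym4 (a b c d : ℂ) : ℂ := a*b*c*d


lemma Xv_ne_zero : (Xv : F) ≠ 0 := RatFunc.X_ne_zero
lemma Xvinv_ne_zero : (Xv⁻¹ : F) ≠ 0 := inv_ne_zero Xv_ne_zero

lemma eval₂_C_X (p : Polynomial ℂ) :
    Polynomial.eval₂ RatFunc.C Xv p = algebraMap (Polynomial ℂ) F p := by
  have : (Polynomial.eval₂RingHom RatFunc.C Xv : Polynomial ℂ →+* F)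
      = algebraMap (Polynomial ℂ) F := by
    apply Polynomial.ringHom_ext
    · intro a; simp [RatFunc.algebraMap_C, Xv]
    · simp [RatFunc.algebraMap_X, Xv]
  exact congrFun (congrArg (fun h => h.toFun) this) p

/-- key reverse identity -/
lemma eval₂_inv_eq (p : Polynomial ℂ) :
    Polynomial.eval₂ RatFunc.C Xv⁻¹ p
      = algebraMap (Polynomial ℂ) F p.reverse * (Xv⁻¹) ^ p.natDegree := by
  letI : Invertible (Xv⁻¹ : F) := invertibleOfNonzero Xvinv_ne_zero
  have h := Polynomial.eval₂_reverse_mul_pow RatFunc.C (Xv⁻¹ : F) p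
  rw [invOf_eq_inv, inv_inv, eval₂_C_X] at h
  exact h.symm

lemma evalmap_injective :
    Function.Injective (Polynomial.eval₂RingHom RatFunc.C (Xv⁻¹ : F)) := by
  intro p q h
  have h' : Polynomial.eval₂ RatFunc.C (Xv⁻¹ : F) (p - q) = 0 := by
    simp only [Polynomial.eval₂RingHom] at h
    rw [Polynomial.eval₂_sub]
    simpa [Polynomial.eval₂RingHom] using sub_eq_zero.mpr h
  rw [eval₂_inv_eq] at h'
  rcases mul_eq_zero.mp h' with h'' | h''
  · have : (p - q).reverse = 0 := by
      exact (map_eq_zero_iff _ (RatFunc.algebraMap_injective ℂ)).mp h''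
    have := Polynomial.reverse_eq_zero.mp this
    exact sub_eq_zero.mp this
  · exact absurd h'' (pow_ne_zero _ Xvinv_ne_zero)

/-- The field endomorphism of `F` substituting `z ↦ z⁻¹`. -/
def Phi : F →+* F := IsFractionRing.lift evalmap_injective

lemma Phi_algebraMap (p : Polynomial ℂ) :
    Phi (algebraMap (Polynomial ℂ) F p) = Polynomial.eval₂ RatFunc.C Xv⁻¹ p :=
  IsFractionRing.lift_algebraMap evalmap_injective p

lemma Phi_X : Phi Xv = Xv⁻¹ := by
  have := Phi_algebraMap Polynomial.X
  simpa [RatFunc.algebraMap_X, Xv] using this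

lemma Phi_C (x : ℂ) : Phi (Cc x) = Cc x := by
  have := Phi_algebraMap (Polynomial.C x)
  simpa [RatFunc.algebraMap_C, Cc] using this

lemma Phi_one : Phi 1 = 1 := map_one _

lemma subst_eq (f : F) : subst Xv⁻¹ f = Phi f := by
  rw [subst, RatFunc.eval]
  rw [← Phi_algebraMap, ← Phi_algebraMap, ← map_div₀]
  congr 1
  exact RatFunc.num_div_denom f

lemma alg_one_sub (a : ℂ) :
    (1 : F) - Cc a * Xv = algebraMap (Polynomial ℂ) F (1 - Polynomial.C a * Polynomial.X) := by
  simp [map_sub, map_mul, RatFunc.algebraMap_C, RatFunc.algebraMap_X, Cc, Xv]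

lemma alg_X_sub (a : ℂ) :
    Xv - Cc a = algebraMap (Polynomial ℂ) F (Polynomial.X - Polynomial.C a) := by
  simp [map_sub, RatFunc.algebraMap_C, RatFunc.algebraMap_X, Cc, Xv]

lemma one_sub_poly_ne (a : ℂ) : (1 - Polynomial.C a * Polynomial.X : Polynomial ℂ) ≠ 0 := by
  intro h
  have := congrArg (Polynomial.eval 0) h
  simp at this

lemma one_sub_ne (a : ℂ) : (1 : F) - Cc a * Xv ≠ 0 := by
  rw [alg_one_sub]
  exact RatFunc.algebraMap_ne_zero (one_sub_poly_ne a)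

lemma X_sub_ne (a : ℂ) : (Xv : F) - Cc a ≠ 0 := by
  rw [alg_X_sub]
  exact RatFunc.algebraMap_ne_zero (Polynomial.X_sub_C_ne_zero a)

lemma one_sub_sq_ne : (1 : F) - Xv ^ 2 ≠ 0 := by
  have : (1 : F) - Xv ^ 2 = algebraMap (Polynomial ℂ) F (1 - Polynomial.X ^ 2) := by
    simp [map_sub, map_pow, RatFunc.algebraMap_X, Xv]
  rw [this]
  apply RatFunc.algebraMap_ne_zero
  intro h
  have := congrArg Polynomial.natDegree (sub_eq_zero.mp h).symm
  simp [Polynomial.natDegree_X_pow] at this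

lemma T1_eq_neg_iff (a b : ℂ) (f : F) :
    T1op a b f = -f ↔
      (1 - Cc a * Xv) * (1 - Cc b * Xv) * Phi f = (Xv - Cc a) * (Xv - Cc b) * f := by
  rw [T1op, subst_eq, div_mul_eq_mul_div, div_mul_eq_mul_div, ← add_div,
    div_eq_iff one_sub_sq_ne]
  constructor <;> intro h <;> linear_combination h

lemma T1_back (a b : ℂ) (f g : F) (hg : Phi g = g)
    (hfg : f = Xv⁻¹ * (1 - Cc a * Xv) * (1 - Cc b * Xv) * g) : T1op a b f = -f := by
  rw [T1_eq_neg_iff]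
  have hPf : Phi f = Xv * ((1 - Cc a * Xv⁻¹) * (1 - Cc b * Xv⁻¹)) * g := by
    rw [hfg]
    simp only [map_mul, map_sub, map_one, map_inv₀, Phi_X, Phi_C, inv_inv, hg]
    ring
  rw [hPf, hfg]
  field_simp [Xv_ne_zero]

lemma Cc_inv (x : ℂ) : Cc x⁻¹ = (Cc x)⁻¹ := map_inv₀ RatFunc.C x

lemma Cc_mul (x y : ℂ) : Cc (x * y) = Cc x * Cc y := map_mul RatFunc.C x y

lemma Cc_ne_zero {x : ℂ} (hx : x ≠ 0) : Cc x ≠ 0 := by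
  simpa [Cc] using (map_ne_zero RatFunc.C).mpr hx

theorem forward (a b : ℂ) (ha : a ≠ 0) (hb : b ≠ 0)
    (haa : a ≠ a⁻¹) (hab : a ≠ b⁻¹) (hba : b ≠ a⁻¹) (hbb : b ≠ b⁻¹)
    (f : RatFunc ℂ) (hf : IsLaurent f) (hT : T1op a b f = -f) :
    ∃ g : RatFunc ℂ, IsLaurent g ∧ subst Xv⁻¹ g = g ∧
      f = Xv⁻¹ * (1 - Cc a * Xv) * (1 - Cc b * Xv) * g := by
  obtain ⟨p, n, hfp⟩ := hf
  by_cases hp0 : p = 0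
  · refine ⟨0, ⟨0, 0, by simp⟩, by simp [subst_eq], ?_⟩
    rw [hfp, hp0]; simp
  have key := (T1_eq_neg_iff a b f).mp hT
  set d := p.natDegree with hd
  set pr := p.reverse with hpr
  have hXn : (Xv : F) ^ n ≠ 0 := pow_ne_zero _ Xv_ne_zero
  have hXd : (Xv : F) ^ d ≠ 0 := pow_ne_zero _ Xv_ne_zero
  have hfm : f * Xv ^ n = algebraMap (Polynomial ℂ) F p := by
    rw [hfp]; field_simp
  have hPf' : Phi f * Xv ^ d = algebraMap (Polynomial ℂ) F pr * Xv ^ n := by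
    rw [hfp, map_div₀, Phi_algebraMap, eval₂_inv_eq, map_pow, Phi_X, ← hd, ← hpr]
    field_simp [Xv_ne_zero]
    rw [one_div, inv_pow, inv_pow, inv_mul_cancel_right₀ (pow_ne_zero _ Xv_ne_zero),
      inv_mul_cancel_right₀ (pow_ne_zero _ Xv_ne_zero)]
  have keyF : algebraMap (Polynomial ℂ) F
        ((1 - Polynomial.C a * Polynomial.X) * (1 - Polynomial.C b * Polynomial.X)
          * pr * Polynomial.X ^ (2 * n))
      = algebraMap (Polynomial ℂ) F
        ((Polynomial.X - Polynomial.C a) * (Polynomial.X - Polynomial.C b)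
          * p * Polynomial.X ^ d) := by
    simp only [map_mul, map_sub, map_one, map_pow, RatFunc.algebraMap_X, RatFunc.algebraMap_C]
    show (1 - Cc a * Xv) * (1 - Cc b * Xv) * _ * Xv ^ (2 * n)
        = (Xv - Cc a) * (Xv - Cc b) * _ * Xv ^ d
    linear_combination (-((1 - Cc a * Xv) * (1 - Cc b * Xv)) * Xv ^ n) * hPf'
      + Xv ^ d * Xv ^ n * key + ((Xv - Cc a) * (Xv - Cc b)) * Xv ^ d * hfm
  have hpoly := RatFunc.algebraMap_injective ℂ keyF
  -- root at a⁻¹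
  have hrootA : Polynomial.eval a⁻¹ p = 0 := by
    have h := congrArg (Polynomial.eval a⁻¹) hpoly
    simp only [Polynomial.eval_mul, Polynomial.eval_sub, Polynomial.eval_one,
      Polynomial.eval_pow, Polynomial.eval_X, Polynomial.eval_C,
      mul_inv_cancel₀ ha, sub_self, zero_mul] at h
    have h1 : a⁻¹ - a ≠ 0 := sub_ne_zero.mpr (Ne.symm haa)
    have h2 : a⁻¹ - b ≠ 0 := sub_ne_zero.mpr (Ne.symm hba)
    have h3 : (a⁻¹ : ℂ) ^ d ≠ 0 := pow_ne_zero _ (inv_ne_zero ha)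
    by_contra hne
    exact (mul_ne_zero (mul_ne_zero (mul_ne_zero h1 h2) hne) h3) h.symm
  obtain ⟨p₁, hp₁⟩ := Polynomial.dvd_iff_isRoot.mpr hrootA
  have e1 : (1 - Polynomial.C a * Polynomial.X : Polynomial ℂ)
      = Polynomial.C (-a) * (Polynomial.X - Polynomial.C a⁻¹) := by
    rw [mul_sub, ← Polynomial.C_mul]
    rw [show -a * a⁻¹ = -(a * a⁻¹) by ring, mul_inv_cancel₀ ha]
    simp [Polynomial.C_neg]
    ring
  rw [hp₁] at hpoly
  have hpoly2 : Polynomial.C (-a) * (1 - Polynomial.C b * Polynomial.X) * pr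
        * Polynomial.X ^ (2 * n)
      = (Polynomial.X - Polynomial.C a) * (Polynomial.X - Polynomial.C b) * p₁
        * Polynomial.X ^ d := by
    apply mul_left_cancel₀ (Polynomial.X_sub_C_ne_zero (a⁻¹ : ℂ))
    linear_combination hpoly
      - ((1 - Polynomial.C b * Polynomial.X) * pr * Polynomial.X ^ (2 * n)) * e1
  have hrootB : Polynomial.eval b⁻¹ p₁ = 0 := by
    have h := congrArg (Polynomial.eval b⁻¹) hpoly2
    simp only [Polynomial.eval_mul, Polynomial.eval_sub, Polynomial.eval_one,
      Polynomial.eval_pow, Polynomial.eval_X, Polynomial.eval_C,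
      mul_inv_cancel₀ hb, sub_self, zero_mul, mul_zero] at h
    have h1 : b⁻¹ - a ≠ 0 := sub_ne_zero.mpr (Ne.symm hab)
    have h2 : b⁻¹ - b ≠ 0 := sub_ne_zero.mpr (Ne.symm hbb)
    have h3 : (b⁻¹ : ℂ) ^ d ≠ 0 := pow_ne_zero _ (inv_ne_zero hb)
    by_contra hne
    exact (mul_ne_zero (mul_ne_zero (mul_ne_zero h1 h2) hne) h3) h.symm
  obtain ⟨p₂, hp₂⟩ := Polynomial.dvd_iff_isRoot.mpr hrootB
  -- the symmetric Laurent polynomial g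
  set G : F := algebraMap (Polynomial ℂ) F (Polynomial.C ((a * b)⁻¹) * Polynomial.X * p₂)
      / Xv ^ n with hG
  have hfg : f = Xv⁻¹ * (1 - Cc a * Xv) * (1 - Cc b * Xv) * G := by
    rw [hfp, hp₁, hp₂, hG]
    simp only [map_mul, map_sub, map_one, RatFunc.algebraMap_X, RatFunc.algebraMap_C,
      show ∀ x : ℂ, RatFunc.C x = Cc x from fun _ => rfl, show RatFunc.X = Xv from rfl,
      Cc_inv, Cc_mul]
    field_simp [Xv_ne_zero, Cc_ne_zero ha, Cc_ne_zero hb]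
    ring
  refine ⟨G, ⟨_, n, hG⟩, ?_, hfg⟩
  rw [subst_eq]
  have hPfg : Phi f = Xv * ((1 - Cc a * Xv⁻¹) * (1 - Cc b * Xv⁻¹)) * Phi G := by
    rw [hfg]
    simp only [map_mul, map_sub, map_one, map_inv₀, Phi_X, Phi_C, inv_inv]
    ring
  have c_ne : (Xv - Cc a) * (Xv - Cc b) * ((1 - Cc a * Xv) * (1 - Cc b * Xv)) * Xv⁻¹ ≠ 0 :=
    mul_ne_zero (mul_ne_zero (mul_ne_zero (X_sub_ne a) (X_sub_ne b))
      (mul_ne_zero (one_sub_ne a) (one_sub_ne b))) (inv_ne_zero Xv_ne_zero)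
  apply mul_left_cancel₀ c_ne
  have e1' : (Xv - Cc a) * (Xv - Cc b) * ((1 - Cc a * Xv) * (1 - Cc b * Xv)) * Xv⁻¹ * Phi G
      = (1 - Cc a * Xv) * (1 - Cc b * Xv) * Phi f := by
    rw [hPfg]
    field_simp [Xv_ne_zero]
  have e2' : (Xv - Cc a) * (Xv - Cc b) * ((1 - Cc a * Xv) * (1 - Cc b * Xv)) * Xv⁻¹ * G
      = (Xv - Cc a) * (Xv - Cc b) * f := by
    rw [hfg]; ring
  rw [e1', e2']
  exact key

theorem stmt6 (q a b : ℂ) (hq : q ≠ 0) (hroot : ∀ m : ℕ, 1 ≤ m → q ^ m ≠ 1)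
    (ha : a ≠ 0) (hb : b ≠ 0)
    (haa : a ≠ a⁻¹) (hab : a ≠ b⁻¹) (hba : b ≠ a⁻¹) (hbb : b ≠ b⁻¹) :
    ∀ f : RatFunc ℂ, IsLaurent f →
      (T1op a b f = -f ↔
        ∃ g : RatFunc ℂ, IsLaurent g ∧ subst Xv⁻¹ g = g ∧
          f = Xv⁻¹ * (1 - Cc a * Xv) * (1 - Cc b * Xv) * g) := by
  intro f hf
  constructor
  · exact forward a b ha hb haa hab hba hbb f hf
  · rintro ⟨g, hgL, hgsym, hfg⟩
    rw [subst_eq] at hgsym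
    exact T1_back a b f g hgsym hfg


end
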